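/- Let n₁, ..., n_m be positive integers with n₁ + ⋯ + n_m ≥ n and each n_i ≤ n/2. Then there exist idempotents P₁, ..., P_m on an n-dimensional inner product space with rank P_i = n_i and a constant λ > 0 such that Σᵢ P_i*P_i = λ·I. -/

import Mathlib

open scoped InnerProductSpace ComplexConjugate

section aux

variable {𝕜 E : Type*} [RCLike 𝕜] [NormedAddCommGroup E] [InnerProductSpace 𝕜 E]

noncomputable def rankOneLM (u w : E) : E →ₗ[𝕜] E := (innerₛₗ 𝕜 u).smulRight w

lemma rankOneLM_apply (u w x : E) : rankOneLM (𝕜 := 𝕜) u w x = ⟪u, x⟫_𝕜 • w := rfl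

lemma rankOneLM_comp (u w u' w' : E) :
    rankOneLM (𝕜 := 𝕜) u w ∘ₗ rankOneLM u' w' = ⟪u, w'⟫_𝕜 • rankOneLM u' w := by
  ext x
  simp [rankOneLM_apply, smul_smul, mul_comm]

lemma rankOneLM_adjoint [FiniteDimensional 𝕜 E] (u w : E) :
    LinearMap.adjoint (rankOneLM (𝕜 := 𝕜) u w) = rankOneLM w u := by
  symm
  rw [LinearMap.eq_adjoint_iff]
  intro x y
  simp [rankOneLM_apply, inner_smul_left, inner_smul_right, mul_comm]

lemma cover_aux (d : ℕ → ℕ) : ∀ m r, r < ∑ k ∈ Finset.range m, d k →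
    ∃ i, i < m ∧ ∃ j, j < d i ∧ (∑ k ∈ Finset.range i, d k) + j = r := by
  intro m
  induction m with
  | zero => simp
  | succ m ih =>
    intro r hr
    rw [Finset.sum_range_succ] at hr
    by_cases h : r < ∑ k ∈ Finset.range m, d k
    · obtain ⟨i, him, j, hj, hij⟩ := ih r h
      exact ⟨i, Nat.lt_succ_of_lt him, j, hj, hij⟩
    · exact ⟨m, Nat.lt_succ_self m, r - ∑ k ∈ Finset.range m, d k, by omega, by omega⟩

end aux

set_option maxHeartbeats 8000000 in
theorem stmt_13 {𝕜 E : Type*} [RCLike 𝕜] [NormedAddCommGroup E]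
    [InnerProductSpace 𝕜 E] [FiniteDimensional 𝕜 E]
    (m : ℕ) (d : Fin m → ℕ) (hpos : ∀ i, 0 < d i)
    (hsum : Module.finrank 𝕜 E ≤ ∑ i, d i)
    (hhalf : ∀ i, 2 * d i ≤ Module.finrank 𝕜 E) :
    ∃ (P : Fin m → (E →ₗ[𝕜] E)) (c : ℝ), 0 < c ∧
      (∀ i, P i ∘ₗ P i = P i) ∧
      (∀ i, Module.finrank 𝕜 (LinearMap.range (P i)) = d i) ∧
      ∑ i, (LinearMap.adjoint (P i)) ∘ₗ (P i) = ((c : ℝ) : 𝕜) • LinearMap.id := by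
  classical
  rcases Nat.eq_zero_or_pos m with hm | hm
  · subst hm
    have h0 : Module.finrank 𝕜 E = 0 := by simpa using hsum
    have : Subsingleton E := Module.finrank_zero_iff.mp h0
    refine ⟨fun _ => 0, 1, one_pos, fun i => i.elim0, fun i => i.elim0, ?_⟩
    exact LinearMap.ext fun x => Subsingleton.elim _ _
  -- main case
  set n := Module.finrank 𝕜 E with hn_def
  have hn2 : 2 ≤ n := le_trans (by have := hpos ⟨0, hm⟩; omega) (hhalf ⟨0, hm⟩)
  have hn : 0 < n := by omega
  set b := stdOrthonormalBasis 𝕜 E with hb_def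
  have hbij : ∀ r r' : Fin n, ⟪b r, b r'⟫_𝕜 = if r = r' then 1 else 0 :=
    orthonormal_iff_ite.mp b.orthonormal
  set d' : ℕ → ℕ := fun k => if h : k < m then d ⟨k, h⟩ else 0 with hd'_def
  have hd'sum : ∑ i, d i = ∑ k ∈ Finset.range m, d' k := by
    rw [Finset.sum_range]
    exact Finset.sum_congr rfl fun i _ => by simp [hd'_def]
  set o : Fin m → ℕ := fun i => ∑ k ∈ Finset.range i.1, d' k with ho_def
  set pos : (Σ i : Fin m, Fin (d i)) → ℕ := fun p => o p.1 + p.2.1 with hpos_def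
  set s : (Σ i : Fin m, Fin (d i)) → Fin n :=
    fun p => ⟨pos p % n, Nat.mod_lt _ hn⟩ with hs_def
  set z : (Σ i : Fin m, Fin (d i)) → Fin n :=
    fun p => ⟨(pos p + d p.1) % n, Nat.mod_lt _ hn⟩ with hz_def
  -- within-fiber injectivity facts
  have hA : ∀ (i : Fin m) (j k : Fin (d i)), s ⟨i, j⟩ = s ⟨i, k⟩ → j = k := by
    intro i j k h
    have h1 : (o i + j.1) % n = (o i + k.1) % n := congrArg Fin.val h
    have h2 : j.1 % n = k.1 % n := Nat.ModEq.add_left_cancel' (o i) h1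
    have hdi := hhalf i
    have hj : j.1 < n := by have := j.2; omega
    have hk : k.1 < n := by have := k.2; omega
    exact Fin.ext (by rwa [Nat.mod_eq_of_lt hj, Nat.mod_eq_of_lt hk] at h2)
  have hB : ∀ (i : Fin m) (j k : Fin (d i)), s ⟨i, j⟩ ≠ z ⟨i, k⟩ := by
    intro i j k h
    have h1 : (o i + j.1) % n = (o i + (k.1 + d i)) % n := by
      have h0 := congrArg Fin.val h
      simp only [hs_def, hz_def, hpos_def] at h0
      rw [h0, add_assoc]
    have h2 : j.1 % n = (k.1 + d i) % n := Nat.ModEq.add_left_cancel' (o i) h1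
    have hdi := hhalf i
    have hj : j.1 < n := by have := j.2; omega
    have hk : k.1 + d i < n := by have := k.2; omega
    rw [Nat.mod_eq_of_lt hj, Nat.mod_eq_of_lt hk] at h2
    have := j.2
    omega
  have hC : ∀ (i : Fin m) (j k : Fin (d i)), z ⟨i, j⟩ = z ⟨i, k⟩ → j = k := by
    intro i j k h
    have h1 : (o i + (j.1 + d i)) % n = (o i + (k.1 + d i)) % n := by
      have h0 := congrArg Fin.val h
      simp only [hs_def, hz_def, hpos_def] at h0
      rw [← add_assoc, ← add_assoc]
      exact h0
    have h2 : (j.1 + d i) % n = (k.1 + d i) % n := Nat.ModEq.add_left_cancel' (o i) h1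
    have hdi := hhalf i
    have hj : j.1 + d i < n := by have := j.2; omega
    have hk : k.1 + d i < n := by have := k.2; omega
    rw [Nat.mod_eq_of_lt hj, Nat.mod_eq_of_lt hk] at h2
    exact Fin.ext (by omega)
  set t : Fin n → ℕ :=
    fun r => (Finset.univ.filter (fun p : Σ i : Fin m, Fin (d i) => s p = r)).card with ht_def
  have ht1 : ∀ r, 1 ≤ t r := by
    intro r
    have hr : (r : ℕ) < ∑ k ∈ Finset.range m, d' k := by
      have h1 := r.2
      omega
    obtain ⟨i, him, j, hj, hij⟩ := cover_aux d' m r hr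
    have hdi : d' i = d ⟨i, him⟩ := dif_pos him
    rw [hdi] at hj
    refine Finset.card_pos.mpr ⟨⟨⟨i, him⟩, ⟨j, hj⟩⟩, Finset.mem_filter.mpr ⟨Finset.mem_univ _, ?_⟩⟩
    have hpv : pos ⟨⟨i, him⟩, ⟨j, hj⟩⟩ = (r : ℕ) := hij
    exact Fin.ext (show pos ⟨⟨i, him⟩, ⟨j, hj⟩⟩ % n = (r : ℕ) by
      rw [hpv, Nat.mod_eq_of_lt r.2])
  have htm : ∀ r, t r ≤ m := by
    intro r
    have : t r ≤ (Finset.univ : Finset (Fin m)).card := by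
      refine Finset.card_le_card_of_injOn (fun p => p.1) (fun p _ => Finset.mem_univ _) ?_
      rintro ⟨i, j⟩ hp ⟨i', k⟩ hq hfst
      simp only at hfst
      subst hfst
      have hj : s ⟨i, j⟩ = r := (Finset.mem_filter.mp hp).2
      have hk : s ⟨i, k⟩ = r := (Finset.mem_filter.mp hq).2
      have : j = k := hA i j k (hj.trans hk.symm)
      subst this
      rfl
    simpa using this
  have htpos : ∀ r, (0 : ℝ) < (t r : ℝ) := fun r => by
    have := ht1 r; positivity
  have htr1 : ∀ r, (1 : ℝ) ≤ (m : ℝ) / (t r : ℝ) := by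
    intro r
    rw [le_div_iff₀ (htpos r)]
    have := htm r
    simpa using (Nat.cast_le (α := ℝ)).mpr this
  set α : (Σ i : Fin m, Fin (d i)) → ℝ :=
    fun p => Real.sqrt ((m : ℝ) / (t (s p) : ℝ) - 1) with hα_def
  have hαsq : ∀ p, (1 : ℝ) + α p ^ 2 = (m : ℝ) / (t (s p) : ℝ) := by
    intro p
    rw [hα_def]
    rw [Real.sq_sqrt (by linarith [htr1 (s p)])]
    ring
  set w : (Σ i : Fin m, Fin (d i)) → E :=
    fun p => b (s p) + ((α p : ℝ) : 𝕜) • b (z p) with hw_def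
  -- inner product identities
  have hbw : ∀ (i : Fin m) (j k : Fin (d i)),
      ⟪b (s ⟨i, j⟩), w ⟨i, k⟩⟫_𝕜 = if j = k then 1 else 0 := by
    intro i j k
    rw [hw_def]
    simp only [inner_add_right, inner_smul_right, hbij]
    rw [if_neg (hB i j k), mul_zero, add_zero]
    rcases eq_or_ne j k with h | h
    · subst h; simp
    · rw [if_neg (fun hh => h (hA i j k hh)), if_neg h]
  have hww : ∀ (i : Fin m) (j k : Fin (d i)),
      ⟪w ⟨i, j⟩, w ⟨i, k⟩⟫_𝕜 =
        if j = k then (((m : ℝ) / (t (s ⟨i, j⟩) : ℝ) : ℝ) : 𝕜) else 0 := by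
    intro i j k
    have e2 : ⟪b (s ⟨i, j⟩), b (z ⟨i, k⟩)⟫_𝕜 = 0 := by
      rw [hbij, if_neg (hB i j k)]
    have e3 : ⟪b (z ⟨i, j⟩), b (s ⟨i, k⟩)⟫_𝕜 = 0 := by
      rw [hbij, if_neg (fun hh => hB i k j hh.symm)]
    rcases eq_or_ne j k with h | h
    · subst h
      have e1 : ⟪b (s ⟨i, j⟩), b (s ⟨i, j⟩)⟫_𝕜 = 1 := by rw [hbij, if_pos rfl]
      have e4 : ⟪b (z ⟨i, j⟩), b (z ⟨i, j⟩)⟫_𝕜 = 1 := by rw [hbij, if_pos rfl]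
      simp only [hw_def, inner_add_left, inner_add_right, inner_smul_left, inner_smul_right,
        RCLike.conj_ofReal, e1, e2, e3, e4, mul_zero, add_zero, zero_add, mul_one, if_pos rfl]
      rw [← hαsq ⟨i, j⟩]
      push_cast
      ring
    · have e1 : ⟪b (s ⟨i, j⟩), b (s ⟨i, k⟩)⟫_𝕜 = 0 := by
        rw [hbij, if_neg (fun hh => h (hA i j k hh))]
      have e4 : ⟪b (z ⟨i, j⟩), b (z ⟨i, k⟩)⟫_𝕜 = 0 := by
        rw [hbij, if_neg (fun hh => h (hC i j k hh))]
      simp only [hw_def, inner_add_left, inner_add_right, inner_smul_left, inner_smul_right,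
        RCLike.conj_ofReal, e1, e2, e3, e4, mul_zero, add_zero, zero_add, if_neg h]
  -- definition of P
  set Q : Fin n → (E →ₗ[𝕜] E) := fun r => rankOneLM (b r) (b r) with hQ_def
  set P : Fin m → (E →ₗ[𝕜] E) :=
    fun i => ∑ j : Fin (d i), rankOneLM (b (s ⟨i, j⟩)) (w ⟨i, j⟩) with hP_def
  have hmul : ∀ f g : E →ₗ[𝕜] E, f ∘ₗ g = f * g := fun _ _ => rfl
  -- idempotency
  have hidem : ∀ i, P i ∘ₗ P i = P i := by
    intro i
    rw [hP_def, hmul, Finset.sum_mul_sum]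
    have : ∀ j k : Fin (d i),
        rankOneLM (𝕜 := 𝕜) (b (s ⟨i, j⟩)) (w ⟨i, j⟩) * rankOneLM (b (s ⟨i, k⟩)) (w ⟨i, k⟩) =
          if j = k then rankOneLM (b (s ⟨i, k⟩)) (w ⟨i, j⟩) else 0 := by
      intro j k
      rw [← hmul, rankOneLM_comp, hbw, ite_smul, one_smul, zero_smul]
    rw [Finset.sum_congr rfl fun j (_ : j ∈ Finset.univ) =>
      (Finset.sum_congr rfl fun k _ => this j k).trans (Finset.sum_ite_eq Finset.univ j _)]
    exact Finset.sum_congr rfl fun j _ => if_pos (Finset.mem_univ j)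
  -- adjoint composition
  have hadjcomp : ∀ i, LinearMap.adjoint (P i) ∘ₗ P i =
      ∑ j : Fin (d i), (((m : ℝ) / (t (s ⟨i, j⟩) : ℝ) : ℝ) : 𝕜) • Q (s ⟨i, j⟩) := by
    intro i
    have hadj : LinearMap.adjoint (P i) =
        ∑ j : Fin (d i), rankOneLM (w ⟨i, j⟩) (b (s ⟨i, j⟩)) := by
      rw [hP_def, map_sum]
      exact Finset.sum_congr rfl fun j _ => rankOneLM_adjoint _ _
    rw [hadj, hmul, Finset.sum_mul_sum]
    have : ∀ j k : Fin (d i),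
        rankOneLM (𝕜 := 𝕜) (w ⟨i, j⟩) (b (s ⟨i, j⟩)) * rankOneLM (b (s ⟨i, k⟩)) (w ⟨i, k⟩) =
          if j = k then (((m : ℝ) / (t (s ⟨i, j⟩) : ℝ) : ℝ) : 𝕜) •
            rankOneLM (b (s ⟨i, k⟩)) (b (s ⟨i, j⟩)) else 0 := by
      intro j k
      rw [← hmul, rankOneLM_comp, hww, ite_smul, zero_smul]
    rw [Finset.sum_congr rfl fun j (_ : j ∈ Finset.univ) =>
      (Finset.sum_congr rfl fun k _ => this j k).trans (Finset.sum_ite_eq Finset.univ j _)]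
    exact Finset.sum_congr rfl fun j _ => if_pos (Finset.mem_univ j)
  -- resolution of the identity
  have hres : ∑ r : Fin n, Q r = LinearMap.id := by
    refine LinearMap.ext fun x => ?_
    rw [LinearMap.sum_apply]
    simp only [hQ_def, rankOneLM_apply]
    exact b.sum_repr' x
  -- the frame identity
  have hframe : ∑ i, LinearMap.adjoint (P i) ∘ₗ P i = (((m : ℝ) : ℝ) : 𝕜) • LinearMap.id := by
    rw [Finset.sum_congr rfl fun i _ => hadjcomp i]
    rw [Finset.sum_sigma']
    rw [Finset.univ_sigma_univ]
    have hfib := Finset.sum_fiberwise' (Finset.univ : Finset (Σ i : Fin m, Fin (d i))) s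
      (fun r => (((m : ℝ) / (t r : ℝ) : ℝ) : 𝕜) • Q r)
    rw [← hfib]
    have hstep : ∀ r : Fin n,
        ∑ _p ∈ Finset.univ.filter (fun p => s p = r),
          ((((m : ℝ) / (t r : ℝ) : ℝ) : 𝕜) • Q r) = (((m : ℝ) : ℝ) : 𝕜) • Q r := by
      intro r
      have hcard : (Finset.univ.filter (fun p : Σ i : Fin m, Fin (d i) => s p = r)).card = t r :=
        rfl
      have hne : (t r : ℝ) ≠ 0 := ne_of_gt (htpos r)
      have hreal : (t r : ℝ) * ((m : ℝ) / (t r : ℝ)) = (m : ℝ) := by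
        rw [mul_comm]
        exact div_mul_cancel₀ _ hne
      rw [Finset.sum_const, hcard, ← Nat.cast_smul_eq_nsmul 𝕜, smul_smul,
        ← RCLike.ofReal_natCast, ← RCLike.ofReal_mul, hreal]
    rw [Finset.sum_congr rfl fun r _ => hstep r]
    rw [← Finset.smul_sum, hres]
  -- rank
  have hrank : ∀ i, Module.finrank 𝕜 (LinearMap.range (P i)) = d i := by
    intro i
    have hPapp : ∀ x, P i x = ∑ j : Fin (d i), ⟪b (s ⟨i, j⟩), x⟫_𝕜 • w ⟨i, j⟩ := by
      intro x
      rw [hP_def, LinearMap.sum_apply]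
      exact Finset.sum_congr rfl fun j _ => rfl
    have hPw : ∀ j : Fin (d i), P i (b (s ⟨i, j⟩)) = w ⟨i, j⟩ := by
      intro j
      rw [hPapp]
      have : ∀ k : Fin (d i), ⟪b (s ⟨i, k⟩), b (s ⟨i, j⟩)⟫_𝕜 • w ⟨i, k⟩ =
          if k = j then w ⟨i, j⟩ else 0 := by
        intro k
        rw [hbij]
        rcases eq_or_ne k j with h | h
        · subst h; simp
        · rw [if_neg (fun hh => h (hA i k j hh)), if_neg h, zero_smul]
      rw [Finset.sum_congr rfl fun k _ => this k]
      simp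
    have hli : LinearIndependent 𝕜 (fun j : Fin (d i) => w ⟨i, j⟩) := by
      rw [Fintype.linearIndependent_iff]
      intro g hg j
      have h1 := congrArg (fun y => ⟪b (s ⟨i, j⟩), y⟫_𝕜) hg
      simp only [inner_sum, inner_smul_right, inner_zero_right] at h1
      rw [Finset.sum_congr rfl (fun k _ => by rw [hbw i j k])] at h1
      simp only [mul_ite, mul_one, mul_zero] at h1
      rwa [Finset.sum_ite_eq Finset.univ j (fun k => g k), if_pos (Finset.mem_univ j)] at h1
    have hrange : LinearMap.range (P i) =
        Submodule.span 𝕜 (Set.range (fun j : Fin (d i) => w ⟨i, j⟩)) := by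
      apply le_antisymm
      · rintro y ⟨x, rfl⟩
        rw [hPapp]
        exact Submodule.sum_mem _ fun j _ =>
          Submodule.smul_mem _ _ (Submodule.subset_span ⟨j, rfl⟩)
      · rw [Submodule.span_le]
        rintro y ⟨j, rfl⟩
        exact ⟨b (s ⟨i, j⟩), hPw j⟩
    rw [hrange, finrank_span_eq_card hli, Fintype.card_fin]
  exact ⟨P, (m : ℝ), by positivity, hidem, hrank, hframe⟩
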